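/- arXiv:2511.01931 — 4 statements merged into one kernel-verified Lean document; each statement's English description precedes it below -/
import Mathlib

section
/- Let F be a field of characteristic p > 0, let V, W be F-vector spaces of equal finite dimension, and let f : V → W be a p-semilinear map whose image spans W over F. Then ker(f) = 0. -/
/-- A `p`-semilinear map between `F`-vector spaces. -/
def IsPSemilinear (p : ℕ) (F : Type*) [Field F] {V W : Type*}
    [AddCommGroup V] [Module F V] [AddCommGroup W] [Module F W] (f : V → W) : Prop :=
  ∀ (a : F) (x y : V), f (a • x + y) = a ^ p • f x + f y

/-- If `V, W` are `F`-vector spaces of equal finite dimension over a field of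
characteristic `p > 0` and `f : V → W` is a `p`-semilinear map whose image spans `W` over `F`,
then `ker f = 0`. -/
theorem ker_eq_bot_of_span_image_eq_top (p : ℕ) [Fact p.Prime]
    (F : Type*) [Field F] [CharP F p]
    {V W : Type*} [AddCommGroup V] [Module F V] [AddCommGroup W] [Module F W]
    [FiniteDimensional F V] [FiniteDimensional F W]
    (hdim : Module.finrank F V = Module.finrank F W)
    (f : V → W) (hf : IsPSemilinear p F f)
    (hspan : Submodule.span F (Set.range f) = ⊤) :
    ∀ x : V, f x = 0 → x = 0 := by
  classical
  intro x hx
  by_contra hx0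
  -- basic facts about f
  have hzero : f 0 = 0 := by
    have := hf 1 0 0
    simp at this
    linear_combination (norm := abel) this
  have hadd : ∀ u v : V, f (u + v) = f u + f v := by
    intro u v
    have := hf 1 u v
    simpa using this
  have hsmul : ∀ (a : F) (u : V), f (a • u) = a ^ p • f u := by
    intro a u
    have := hf a u 0
    simpa [hzero] using this
  -- extend {x} to a basis
  have li : LinearIndepOn F id ({x} : Set V) :=
    (linearIndepOn_singleton_iff F).mpr hx0
  set s : Set V := li.extend (Set.subset_univ _) with hs
  let b : Module.Basis s F V := Module.Basis.extend li
  haveI : Fintype s := FiniteDimensional.fintypeBasisIndex b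
  have hxs : x ∈ s := li.subset_extend _ (by simp)
  -- f of any element of span F t lies in span F (f '' t)
  have key : ∀ (t : Set V) (v : V), v ∈ Submodule.span F t →
      f v ∈ Submodule.span F (f '' t) := by
    intro t v hv
    induction hv using Submodule.span_induction with
    | mem y hy => exact Submodule.subset_span ⟨y, hy, rfl⟩
    | zero => rw [hzero]; exact Submodule.zero_mem _
    | add y z _ _ hy hz => rw [hadd]; exact Submodule.add_mem _ hy hz
    | smul a y _ hy => rw [hsmul]; exact Submodule.smul_mem _ _ hy
  have hspan_s : Submodule.span F s = ⊤ := by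
    have := b.span_eq
    rwa [Module.Basis.range_extend] at this
  -- W is spanned by f '' (s \ {x})
  have hWspan : Submodule.span F (f '' (s \ {x})) = ⊤ := by
    rw [eq_top_iff, ← hspan, Submodule.span_le]
    rintro _ ⟨v, rfl⟩
    have h1 : f v ∈ Submodule.span F (f '' s) :=
      key s v (hspan_s ▸ Submodule.mem_top)
    have h2 : f '' s ⊆ insert (0 : W) (f '' (s \ {x})) := by
      rintro _ ⟨y, hy, rfl⟩
      by_cases hyx : y = x
      · left; rw [hyx, hx]
      · right; exact ⟨y, ⟨hy, hyx⟩, rfl⟩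
    have h3 : Submodule.span F (f '' s) ≤ Submodule.span F (f '' (s \ {x})) := by
      refine (Submodule.span_mono h2).trans ?_
      rw [Submodule.span_insert_eq_span]
      exact Submodule.zero_mem _
    exact h3 h1
  -- counting
  let S : Finset V := s.toFinset
  have hcoe : ((S.erase x : Finset V) : Set V) = s \ {x} := by
    ext y; simp [S, and_comm]
  have hcard : Module.finrank F W ≤ (S.erase x).card := by
    have h1 : Module.finrank F W ≤ ((S.erase x).image f).card := by
      have h2 : Submodule.span F (((S.erase x).image f : Finset W) : Set W) = ⊤ := by
        rw [Finset.coe_image, hcoe]; exact hWspan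
      have := finrank_span_finset_le_card (R := F) ((S.erase x).image f)
      rw [Set.finrank, h2, finrank_top] at this
      exact this
    exact h1.trans (Finset.card_image_le)
  have hxS : x ∈ S := by simpa [S] using hxs
  have hVcard : Module.finrank F V = S.card := by
    rw [Module.finrank_eq_card_basis b]
    simp [S, Set.toFinset_card]
  have : S.card ≤ (S.erase x).card := by
    rw [← hVcard, hdim] at *; exact hcard
  have hlt : (S.erase x).card < S.card := Finset.card_erase_lt_of_mem hxS
  omega
end

section
/- Let F be a field of characteristic p > 0, V a finite-dimensional F-vector space, and f : V → V a p-semilinear map. Then the F-linear span of f(V) equals V if and only if for every v ∈ V there exist α_1, ..., α_n ∈ F with v = Σ_{i=1}^n α_i f^i(v). -/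
section Aux

variable {p : ℕ} {F : Type*} [Field F] {V : Type*} [AddCommGroup V] [Module F V]
  {f : V → V}

lemma psl_zero (hf : IsPSemilinear p F f) : f 0 = 0 := by
  have h := hf 1 0 0
  simp only [one_smul, add_zero, one_pow] at h
  exact (right_eq_add.mp h)

lemma psl_add (hf : IsPSemilinear p F f) (x y : V) : f (x + y) = f x + f y := by
  have h := hf 1 x y
  simpa using h

lemma psl_smul (hf : IsPSemilinear p F f) (a : F) (x : V) : f (a • x) = a ^ p • f x := by
  have h := hf a x 0
  simpa [psl_zero hf] using h

lemma psl_mem_span (hf : IsPSemilinear p F f) {s : Set V} {x : V}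
    (hx : x ∈ Submodule.span F s) : f x ∈ Submodule.span F (f '' s) := by
  induction hx using Submodule.span_induction with
  | mem y hy => exact Submodule.subset_span ⟨y, hy, rfl⟩
  | zero => rw [psl_zero hf]; exact zero_mem _
  | add y z _ _ hy hz => rw [psl_add hf]; exact add_mem hy hz
  | smul a y _ hy => rw [psl_smul hf]; exact Submodule.smul_mem _ _ hy

/-- If the span of the image of a semilinear map is everything, then `f` increases
no dimension: `finrank U ≤ finrank (span (f '' U))`. -/
lemma psl_finrank_le [FiniteDimensional F V] (hf : IsPSemilinear p F f)
    (htop : Submodule.span F (Set.range f) = ⊤) (U : Submodule F V) :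
    Module.finrank F U ≤ Module.finrank F (Submodule.span F (f '' (U : Set V))) := by
  classical
  set d := Module.finrank F U with hd
  let b : Module.Basis (Fin d) F U := Module.finBasis F U
  set x : Fin d → V := fun i => ((b i : U) : V) with hxdef
  have hx : LinearIndependent F x := by
    have := b.linearIndependent.map' U.subtype (Submodule.ker_subtype U)
    exact this
  set s : Set V := Set.range x with hsdef
  have hs : LinearIndepOn F id s := (linearIndepOn_id_range_iff hx.injective).mpr hx
  have hsub : s ⊆ hs.extend (Set.subset_univ s) := hs.subset_extend _
  let B : Module.Basis (hs.extend (Set.subset_univ s)) F V := Module.Basis.extend hs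
  haveI : Fintype (hs.extend (Set.subset_univ s)) := FiniteDimensional.fintypeBasisIndex B
  have hBrange : Set.range ((↑) : hs.extend (Set.subset_univ s) → V) =
      hs.extend (Set.subset_univ s) := Subtype.range_coe
  have hBspan : Submodule.span F (hs.extend (Set.subset_univ s)) = ⊤ := by
    have := B.span_eq
    rwa [Module.Basis.coe_extend, hBrange] at this
  -- the images of the extended basis span V
  have hspanB : ⊤ ≤ Submodule.span F
      (Set.range fun i : hs.extend (Set.subset_univ s) => f ↑i) := by
    rw [← htop, Submodule.span_le]
    rintro _ ⟨v, rfl⟩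
    have hv : v ∈ Submodule.span F (hs.extend (Set.subset_univ s)) := by
      rw [hBspan]; trivial
    have := psl_mem_span hf hv
    rwa [show f '' (hs.extend (Set.subset_univ s)) =
        Set.range (fun i : hs.extend (Set.subset_univ s) => f ↑i) by
      rw [← Set.image_eq_range]] at this
  have hcard : Fintype.card (hs.extend (Set.subset_univ s)) = Module.finrank F V :=
    (Module.finrank_eq_card_basis B).symm
  have hindep : LinearIndependent F (fun i : hs.extend (Set.subset_univ s) => f ↑i) :=
    linearIndependent_of_top_le_span_of_card_eq_finrank hspanB hcard
  -- restrict to s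
  have hz : LinearIndependent F (fun i : s => f ↑i) := by
    have := hindep.comp (Set.inclusion hsub) (Set.inclusion_injective hsub)
    exact this
  -- these vectors live in the span of f '' U
  have hmem : ∀ i : s, f ↑i ∈ Submodule.span F (f '' (U : Set V)) := by
    rintro ⟨_, j, rfl⟩
    exact Submodule.subset_span ⟨x j, (b j).2, rfl⟩
  set N := Submodule.span F (f '' (U : Set V)) with hN
  set w : s → N := fun i => ⟨f ↑i, hmem i⟩ with hw
  have hwi : LinearIndependent F w := by
    apply LinearIndependent.of_comp N.subtype
    exact hz
  have hcards : Fintype.card s = d := by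
    calc Fintype.card s = Nat.card s := Nat.card_eq_fintype_card.symm
      _ = Nat.card (Fin d) := Nat.card_range_of_injective hx.injective
      _ = d := by simp
  calc d = Fintype.card s := hcards.symm
    _ ≤ Module.finrank F N := hwi.fintype_card_le_finrank

end Aux

/-- For a `p`-semilinear map `f : V → V` on a finite-dimensional vector space
over a field of characteristic `p > 0`, the `F`-linear span of the image of `f` is all of `V`
if and only if every `v ∈ V` is an `F`-linear combination of the iterates `f v, f² v, …, fⁿ v`. -/
theorem span_image_eq_top_iff (p : ℕ) [Fact p.Prime]
    (F : Type*) [Field F] [CharP F p]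
    {V : Type*} [AddCommGroup V] [Module F V] [FiniteDimensional F V]
    (f : V → V) (hf : IsPSemilinear p F f) :
    Submodule.span F (Set.range f) = ⊤ ↔
      ∀ v : V, ∃ (n : ℕ) (α : Fin n → F), v = ∑ i : Fin n, α i • f^[(i : ℕ) + 1] v := by
  constructor
  · intro htop v
    classical
    set g : ℕ → V := fun k => f^[k] v with hg
    set U' : Submodule F V := Submodule.span F (Set.range g) with hU'
    set U : Submodule F V := Submodule.span F (Set.range fun k : ℕ => g (k + 1)) with hU
    have hUU' : U ≤ U' := Submodule.span_mono (by rintro _ ⟨k, rfl⟩; exact ⟨k + 1, rfl⟩)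
    -- f maps U' into U
    have hfU' : ∀ u ∈ U', f u ∈ U := by
      intro u hu
      induction hu using Submodule.span_induction with
      | mem y hy =>
        obtain ⟨k, rfl⟩ := hy
        have : f (g k) = g (k + 1) := by
          simp only [hg, Function.iterate_succ_apply']
        rw [this]
        exact Submodule.subset_span ⟨k, rfl⟩
      | zero => rw [psl_zero hf]; exact zero_mem _
      | add y z _ _ hy hz => rw [psl_add hf]; exact add_mem hy hz
      | smul a y _ hy => rw [psl_smul hf]; exact Submodule.smul_mem _ _ hy
    have h1 : Submodule.span F (f '' (U' : Set V)) ≤ U := by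
      rw [Submodule.span_le]
      rintro _ ⟨u, hu, rfl⟩
      exact hfU' u hu
    have h2 : U ≤ Submodule.span F (f '' (U' : Set V)) := by
      rw [hU, Submodule.span_le]
      rintro _ ⟨k, rfl⟩
      refine Submodule.subset_span ⟨g k, ?_, ?_⟩
      · exact Submodule.subset_span ⟨k, rfl⟩
      · simp only [hg, Function.iterate_succ_apply']
    have hspanEq : Submodule.span F (f '' (U' : Set V)) = U := le_antisymm h1 h2
    have hrank : Module.finrank F U' ≤ Module.finrank F U := by
      have := psl_finrank_le hf htop U'
      rwa [hspanEq] at this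
    have hEq : U = U' := Submodule.eq_of_le_of_finrank_le hUU' hrank
    have hv : v ∈ U := by
      rw [hEq]
      exact Submodule.subset_span ⟨0, rfl⟩
    rw [hU] at hv
    rw [Finsupp.mem_span_range_iff_exists_finsupp] at hv
    obtain ⟨c, hc⟩ := hv
    refine ⟨c.support.sup id + 1, fun i => c i, ?_⟩
    have hsupp : c.support ⊆ Finset.range (c.support.sup id + 1) := by
      intro i hi
      simp only [Finset.mem_range]
      exact Nat.lt_succ_of_le (Finset.le_sup (f := id) hi)
    calc v = c.sum fun i a => a • g (i + 1) := hc.symm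
      _ = ∑ i ∈ Finset.range (c.support.sup id + 1), c i • g (i + 1) :=
        Finsupp.sum_of_support_subset c hsupp _ (by intro i _; simp)
      _ = ∑ i : Fin (c.support.sup id + 1), c i • f^[(i : ℕ) + 1] v := by
        rw [← Fin.sum_univ_eq_sum_range (fun i => c i • g (i + 1))]
  · intro h
    rw [eq_top_iff]
    intro v _
    obtain ⟨n, α, hv⟩ := h v
    rw [hv]
    apply Submodule.sum_mem
    intro i _
    apply Submodule.smul_mem
    apply Submodule.subset_span
    exact ⟨f^[(i : ℕ)] v, by rw [← Function.iterate_succ_apply' f]⟩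
end

section
/- In a restricted Lie algebra (L, [p]) over a field of characteristic p > 0, if x and y are semisimple elements with [x, y] = 0, then x + y is semisimple. -/
open scoped TensorProduct

/-- Iterated adjoint action: `adIter z n w = (ad z)^n w`. -/
def adIter {L : Type*} [LieRing L] (z : L) : ℕ → L → L
  | 0, w => w
  | n+1, w => ⁅z, adIter z n w⁆

/-- `pm` is a `p`-mapping on the Lie algebra `L` over `F`. -/
structure IsPMap (p : ℕ) (F : Type*) [Field F] (L : Type*) [LieRing L] [LieAlgebra F L]
    (pm : L → L) : Prop where
  ad_pow : ∀ a x : L, ⁅pm a, x⁆ = adIter a p x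
  smul_pow : ∀ (c : F) (a : L), pm (c • a) = c ^ p • pm a
  add_pow : ∀ a b : L, ∃ s : Fin (p - 1) → L,
    adIter ((Polynomial.X : Polynomial F) ⊗ₜ[F] a + (1 : Polynomial F) ⊗ₜ[F] b) (p - 1)
        ((1 : Polynomial F) ⊗ₜ[F] a)
      = (∑ j : Fin (p - 1), ((j : ℕ) + 1) •
          (((Polynomial.X : Polynomial F) ^ (j : ℕ)) ⊗ₜ[F] s j)) ∧
    pm (a + b) = pm a + pm b + ∑ j : Fin (p - 1), s j

/-- `H` is a `p`-subalgebra w.r.t. the map `pm`. -/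
def IsPSubalgebra (F : Type*) [Field F] {L : Type*} [LieRing L] [LieAlgebra F L]
    (pm : L → L) (H : LieSubalgebra F L) : Prop :=
  ∀ x ∈ H, pm x ∈ H

/-- The `p`-subalgebra generated by a set `S`. -/
def pSpan (F : Type*) [Field F] {L : Type*} [LieRing L] [LieAlgebra F L]
    (pm : L → L) (S : Set L) : LieSubalgebra F L :=
  sInf {H : LieSubalgebra F L | IsPSubalgebra F pm H ∧ S ⊆ H}

/-- An element `x` is semisimple if it lies in the `p`-subalgebra generated by `pm x`. -/
def IsSemisimpleElt (F : Type*) [Field F] {L : Type*} [LieRing L] [LieAlgebra F L]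
    (pm : L → L) (x : L) : Prop :=
  x ∈ pSpan F pm {pm x}

/-- An element is `p`-nilpotent if some iterate of the `p`-map kills it. -/
def IsPNilpotentElt {L : Type*} (pm : L → L) [Zero L] (x : L) : Prop :=
  ∃ n : ℕ, pm^[n] x = 0


section Core
variable {F : Type*} [Field F] {σ : F →+* F} {M : Type*} [AddCommGroup M] [Module F M]

/-- Semilinear image of a span lands in any submodule containing images of generators. -/
theorem semilin_span {V W : Type*} [AddCommGroup V] [Module F V] [AddCommGroup W] [Module F W]
    (φ : V →ₛₗ[σ] W) {s : Set V} {T : Submodule F W} (h : ∀ m ∈ s, φ m ∈ T) :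
    ∀ v ∈ Submodule.span F s, φ v ∈ T := by
  intro v hv
  induction hv using Submodule.span_induction with
  | mem v hv => exact h v hv
  | zero => rw [map_zero]; exact T.zero_mem
  | add a b _ _ ha hb => rw [map_add]; exact T.add_mem ha hb
  | smul c a _ ha => rw [map_smulₛₗ]; exact T.smul_mem _ ha

theorem core_aux {V : Type*} [AddCommGroup V] [Module F V] [FiniteDimensional F V]
    (φ : V →ₛₗ[σ] V) (hφ : (⊤ : Submodule F V) ≤ Submodule.span F (Set.range φ))
    {Z K : Submodule F V} (hlt : Z < K) (hK : ∀ v ∈ K, φ v ∈ Z) : False := by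
  classical
  obtain ⟨C, hC⟩ := K.exists_isCompl
  obtain ⟨b⟩ : Nonempty (Module.Basis (Fin (Module.finrank F C)) F C) := ⟨Module.finBasis F C⟩
  set S : Submodule F V :=
    Submodule.span F (Set.range fun i => φ (b i : V)) with hSdef
  have hSr : Module.finrank F S ≤ Module.finrank F C := by
    simpa [Set.finrank] using finrank_range_le_card (R := F) (fun i => φ (b i : V))
  have hCspan : (Submodule.span F (Set.range fun i => (b i : V))) = C := by
    have h2 : Submodule.map C.subtype (Submodule.span F (Set.range b))
        = Submodule.span F (Set.range fun i => (b i : V)) := by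
      rw [Submodule.map_span, ← Set.range_comp]; rfl
    rw [← h2, b.span_eq, Submodule.map_subtype_top]
  have himg : ∀ v : V, φ v ∈ Z ⊔ S := by
    intro v
    have hv : v ∈ K ⊔ C := by rw [hC.sup_eq_top]; trivial
    obtain ⟨k, hk, c, hc, rfl⟩ := Submodule.mem_sup.mp hv
    rw [map_add]
    refine Submodule.add_mem _ (Submodule.mem_sup_left (hK k hk)) ?_
    have hc' : c ∈ Submodule.span F (Set.range fun i => (b i : V)) := by
      rw [hCspan]; exact hc
    refine Submodule.mem_sup_right (semilin_span φ ?_ c hc')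
    rintro _ ⟨i, rfl⟩
    exact Submodule.subset_span ⟨i, rfl⟩
  have htop : Z ⊔ S = ⊤ := by
    rw [eq_top_iff]
    refine le_trans hφ (Submodule.span_le.mpr ?_)
    rintro _ ⟨v, rfl⟩
    exact himg v
  have h1 : Module.finrank F V ≤ Module.finrank F Z + Module.finrank F S := by
    have h0 := Submodule.finrank_sup_add_finrank_inf_eq Z S
    rw [htop] at h0
    have h2 : Module.finrank F (⊤ : Submodule F V) = Module.finrank F V := finrank_top F V
    omega
  have h3 : Module.finrank F Z < Module.finrank F K := Submodule.finrank_lt_finrank_of_lt hlt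
  have h4 : Module.finrank F K + Module.finrank F C = Module.finrank F V :=
    Submodule.finrank_add_eq_of_isCompl hC
  omega

theorem core_fd {V : Type*} [AddCommGroup V] [Module F V] [FiniteDimensional F V]
    (φ : V →ₛₗ[σ] V) (hφ : (⊤ : Submodule F V) ≤ Submodule.span F (Set.range φ)) (w : V) :
    w ∈ Submodule.span F (Set.range fun k : ℕ => φ^[k + 1] w) := by
  by_contra hw
  refine core_aux φ hφ (Z := Submodule.span F (Set.range fun k : ℕ => φ^[k + 1] w))
    (K := (Submodule.span F (Set.range fun k : ℕ => φ^[k + 1] w)).comap φ) ?_ (fun v hv => hv)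
  have hZK : Submodule.span F (Set.range fun k : ℕ => φ^[k + 1] w)
      ≤ (Submodule.span F (Set.range fun k : ℕ => φ^[k + 1] w)).comap φ := by
    rw [Submodule.span_le]
    rintro _ ⟨k, rfl⟩
    refine SetLike.mem_coe.mpr (Submodule.mem_comap.mpr (Submodule.subset_span ⟨k + 1, ?_⟩))
    simp only [Function.iterate_succ_apply' (⇑φ) (k+1) w]
  have hwK : w ∈ (Submodule.span F (Set.range fun k : ℕ => φ^[k + 1] w)).comap φ :=
    Submodule.mem_comap.mpr (Submodule.subset_span ⟨0, by simp⟩)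
  exact lt_of_le_of_ne hZK (by intro h; exact hw (h ▸ hwK))

/-- From a semisimple-type span condition, build a finitely generated stable witness. -/
theorem exists_fg_witness (φ : M →ₛₗ[σ] M) (u : M) (hu0 : u ≠ 0)
    (hu : u ∈ Submodule.span F (Set.range fun k : ℕ => φ^[k + 1] u)) :
    ∃ W : Submodule F M, W.FG ∧ u ∈ W ∧ (∀ v ∈ W, φ v ∈ W) ∧
      W ≤ Submodule.span F (⇑φ '' W) := by
  classical
  obtain ⟨t, hts, hut⟩ := Submodule.mem_span_finite_of_mem_span hu
  have hsub : ∀ s : Finset M, ↑s ⊆ Set.range (fun k : ℕ => φ^[k + 1] u) →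
      ∃ n : ℕ, ↑s ⊆ (fun k : ℕ => φ^[k] u) '' Set.Icc 1 n := by
    intro s
    induction s using Finset.induction_on with
    | empty => exact fun _ => ⟨1, by simp⟩
    | insert m s hm ih =>
      intro hsub'
      rw [Finset.coe_insert, Set.insert_subset_iff] at hsub'
      obtain ⟨⟨k, hk⟩, hs⟩ := hsub'
      obtain ⟨n, hn⟩ := ih hs
      refine ⟨max (k + 1) n, ?_⟩
      rw [Finset.coe_insert, Set.insert_subset_iff]
      constructor
      · exact ⟨k + 1, ⟨by omega, le_max_left _ _⟩, hk⟩
      · exact hn.trans (Set.image_mono (Set.Icc_subset_Icc_right (le_max_right _ _)))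
  obtain ⟨n₁, hn₁⟩ := hsub t hts
  have hex : ∃ n : ℕ, u ∈ Submodule.span F ((fun k : ℕ => φ^[k] u) '' Set.Icc 1 n) :=
    ⟨n₁, Submodule.span_le.mpr (hn₁.trans Submodule.subset_span) hut⟩
  have hspec : u ∈ Submodule.span F ((fun k : ℕ => φ^[k] u) '' Set.Icc 1 (Nat.find hex)) :=
    Nat.find_spec hex
  rcases Nat.eq_zero_or_pos (Nat.find hex) with h0 | h0
  · exfalso
    rw [h0, Set.Icc_eq_empty (by omega), Set.image_empty, Submodule.span_empty,
      Submodule.mem_bot] at hspec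
    exact hu0 hspec
  obtain ⟨N, hN⟩ : ∃ N, Nat.find hex = N + 1 := ⟨Nat.find hex - 1, by omega⟩
  have h1 : u ∈ Submodule.span F ((fun k : ℕ => φ^[k] u) '' Set.Icc 1 (N + 1)) := hN ▸ hspec
  have h2 : u ∉ Submodule.span F ((fun k : ℕ => φ^[k] u) '' Set.Icc 1 N) :=
    Nat.find_min hex (by omega)
  have hIcc : Set.Icc 1 (N + 1) = insert (N + 1) (Set.Icc 1 N) := by
    ext n; simp only [Set.mem_Icc, Set.mem_insert_iff]; omega
  rw [hIcc, Set.image_insert_eq] at h1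
  have hexch := mem_span_insert_exchange h1 h2
  refine ⟨Submodule.span F ((fun k => φ^[k] u) '' Set.Icc 0 N), Submodule.fg_span
    ((Set.finite_Icc 0 N).image _), Submodule.subset_span ⟨0, ⟨le_refl 0, N.zero_le⟩, rfl⟩,
    ?_, ?_⟩
  · -- stability
    have hins : Submodule.span F (insert u ((fun k => φ^[k] u) '' Set.Icc 1 N))
        ≤ Submodule.span F ((fun k => φ^[k] u) '' Set.Icc 0 N) := by
      refine Submodule.span_mono ?_
      rintro m (rfl | ⟨j, hj, rfl⟩)
      · exact ⟨0, ⟨le_refl 0, N.zero_le⟩, rfl⟩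
      · exact ⟨j, ⟨by omega, hj.2⟩, rfl⟩
    intro v hv
    refine semilin_span φ ?_ v hv
    rintro _ ⟨j, hj, rfl⟩
    obtain ⟨hj0, hjN'⟩ := hj
    rcases Nat.lt_or_ge j N with hjN | hjN
    · refine Submodule.subset_span ⟨j + 1, ⟨by omega, by omega⟩, ?_⟩
      simp [Function.iterate_succ_apply']
    · have hjeq : j = N := by omega
      subst hjeq
      have : φ (φ^[j] u) = φ^[j + 1] u := (Function.iterate_succ_apply' (⇑φ) j u).symm
      rw [this]
      exact hins hexch
  · -- W ≤ span (φ '' W)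
    rw [Submodule.span_le]
    rintro _ ⟨j, hj, rfl⟩
    obtain ⟨hj0, hjN'⟩ := hj
    rcases Nat.eq_zero_or_pos j with rfl | hjpos
    · -- u itself
      refine SetLike.mem_coe.mpr (Submodule.span_le.mpr ?_ (hN ▸ hspec))
      rintro _ ⟨i, hi, rfl⟩
      obtain ⟨hi1, hi2⟩ := hi
      refine Submodule.subset_span ⟨φ^[i - 1] u, Submodule.subset_span ⟨i - 1, ⟨by omega, by omega⟩, rfl⟩, ?_⟩
      rw [← Function.iterate_succ_apply' (⇑φ) (i - 1) u]
      congr 1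
      omega
    · refine SetLike.mem_coe.mpr (Submodule.subset_span ⟨φ^[j - 1] u,
        Submodule.subset_span ⟨j - 1, ⟨by omega, by omega⟩, rfl⟩, ?_⟩)
      rw [← Function.iterate_succ_apply' (⇑φ) (j - 1) u]
      congr 1
      omega

/-- Key semilinear lemma: sums of "semisimple" vectors are semisimple. -/
theorem semilinear_add (φ : M →ₛₗ[σ] M) (u v : M)
    (hu : u ∈ Submodule.span F (Set.range fun k : ℕ => φ^[k + 1] u))
    (hv : v ∈ Submodule.span F (Set.range fun k : ℕ => φ^[k + 1] v)) :
    u + v ∈ Submodule.span F (Set.range fun k : ℕ => φ^[k + 1] (u + v)) := by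
  classical
  rcases eq_or_ne u 0 with rfl | hu0
  · simpa using hv
  rcases eq_or_ne v 0 with rfl | hv0
  · simpa using hu
  obtain ⟨Wu, hWufg, huWu, hWustab, hWusp⟩ := exists_fg_witness φ u hu0 hu
  obtain ⟨Wv, hWvfg, hvWv, hWvstab, hWvsp⟩ := exists_fg_witness φ v hv0 hv
  set W : Submodule F M := Wu ⊔ Wv with hW
  have hWfg : W.FG := hWufg.sup hWvfg
  have hWstab : ∀ m ∈ W, φ m ∈ W := by
    intro m hm
    obtain ⟨a, ha, b, hb, rfl⟩ := Submodule.mem_sup.mp hm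
    rw [map_add]
    exact W.add_mem (Submodule.mem_sup_left (hWustab a ha))
      (Submodule.mem_sup_right (hWvstab b hb))
  have hWsp : W ≤ Submodule.span F (⇑φ '' W) := by
    refine sup_le (le_trans hWusp (Submodule.span_mono ?_)) (le_trans hWvsp (Submodule.span_mono ?_))
    · exact Set.image_mono (fun m hm => Submodule.mem_sup_left hm)
    · exact Set.image_mono (fun m hm => Submodule.mem_sup_right hm)
  haveI : FiniteDimensional F W := (Submodule.fg_iff_finiteDimensional W).mp hWfg
  -- restrict φ to W
  set ψ : W →ₛₗ[σ] W := LinearMap.codRestrict W (φ.domRestrict W) (fun c => hWstab c c.2) with hψ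
  have hψcoe : ∀ (k : ℕ) (a : W), ((ψ^[k] a : W) : M) = φ^[k] (a : M) := by
    intro k
    induction k with
    | zero => intro a; rfl
    | succ k ih =>
      intro a
      rw [Function.iterate_succ_apply, Function.iterate_succ_apply]
      exact ih (ψ a)
  have hψtop : (⊤ : Submodule F W) ≤ Submodule.span F (Set.range ψ) := by
    intro a _
    have h1 : (a : M) ∈ Submodule.span F (⇑φ '' W) := hWsp a.2
    have h2 : ∀ m ∈ (⇑φ '' (W : Set M)),
        m ∈ Submodule.map W.subtype (Submodule.span F (Set.range ψ)) := by
      rintro _ ⟨m, hm, rfl⟩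
      refine ⟨ψ ⟨m, hm⟩, Submodule.subset_span ⟨⟨m, hm⟩, rfl⟩, rfl⟩
    have h3 : (a : M) ∈ Submodule.map W.subtype (Submodule.span F (Set.range ψ)) :=
      Submodule.span_le.mpr h2 h1
    obtain ⟨a', ha', haa⟩ := h3
    have : a' = a := Subtype.ext haa
    exact this ▸ ha'
  have hwvmem : u + v ∈ W := W.add_mem (Submodule.mem_sup_left huWu)
    (Submodule.mem_sup_right hvWv)
  have hcore := core_fd ψ hψtop ⟨u + v, hwvmem⟩
  -- push down to M
  have := Submodule.mem_map_of_mem (f := W.subtype) hcore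
  rw [Submodule.map_span] at this
  refine Submodule.span_le.mpr ?_ this
  rintro _ ⟨_, ⟨k, rfl⟩, rfl⟩
  refine Submodule.subset_span ⟨k, ?_⟩
  show φ^[k + 1] (u + v) = ((ψ^[k + 1] (⟨u + v, hwvmem⟩ : W) : W) : M)
  exact (hψcoe (k + 1) ⟨u + v, hwvmem⟩).symm

end Core

section LieAux

theorem adIter_succ_zero {L : Type*} [LieRing L] {z w : L} (h : ⁅z, w⁆ = 0) :
    ∀ n, adIter z (n + 1) w = 0
  | 0 => h
  | n + 1 => by
    show ⁅z, adIter z (n + 1) w⁆ = 0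
    rw [adIter_succ_zero h n, lie_zero]

variable {p : ℕ} [Fact p.Prime] {F : Type*} [Field F] [CharP F p]
  {L : Type*} [LieRing L] [LieAlgebra F L] {pm : L → L}

theorem pm_lie_left (hpm : IsPMap p F L pm) {a b : L} (h : ⁅a, b⁆ = 0) : ⁅pm a, b⁆ = 0 := by
  rw [hpm.ad_pow]
  obtain ⟨m, hm⟩ : ∃ m, p = m + 1 := ⟨p - 1, by have := (Fact.out : p.Prime).pos; omega⟩
  rw [hm]
  exact adIter_succ_zero h m

theorem pm_lie_right (hpm : IsPMap p F L pm) {a b : L} (h : ⁅a, b⁆ = 0) : ⁅a, pm b⁆ = 0 := by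
  have h' : ⁅b, a⁆ = 0 := by rw [← lie_skew, h, neg_zero]
  rw [← lie_skew, pm_lie_left hpm h', neg_zero]

theorem pm_zero (hpm : IsPMap p F L pm) : pm 0 = 0 := by
  have h := hpm.smul_pow 0 0
  rwa [zero_smul, zero_pow (Fact.out : p.Prime).ne_zero, zero_smul] at h

theorem pm_add (hpm : IsPMap p F L pm) {a b : L} (h : ⁅a, b⁆ = 0) :
    pm (a + b) = pm a + pm b := by
  obtain ⟨s, hs1, hs2⟩ := hpm.add_pow a b
  have h' : ⁅b, a⁆ = 0 := by rw [← lie_skew, h, neg_zero]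
  have hadd : ⁅(Polynomial.X : Polynomial F) ⊗ₜ[F] a + (1 : Polynomial F) ⊗ₜ[F] b,
      (1 : Polynomial F) ⊗ₜ[F] a⁆
      = ⁅(Polynomial.X : Polynomial F) ⊗ₜ[F] a, (1 : Polynomial F) ⊗ₜ[F] a⁆
        + ⁅(1 : Polynomial F) ⊗ₜ[F] b, (1 : Polynomial F) ⊗ₜ[F] a⁆ :=
    @add_lie (Polynomial F ⊗[F] L) (Polynomial F ⊗[F] L) _ _
      (LieAlgebra.ExtendScalars.instLieRingModule F (Polynomial F) L L) _ _ _
  have hbr : ⁅(Polynomial.X : Polynomial F) ⊗ₜ[F] a + (1 : Polynomial F) ⊗ₜ[F] b,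
      (1 : Polynomial F) ⊗ₜ[F] a⁆ = 0 := by
    rw [hadd, LieAlgebra.ExtendScalars.bracket_tmul, LieAlgebra.ExtendScalars.bracket_tmul,
      lie_self, h', TensorProduct.tmul_zero, TensorProduct.tmul_zero, add_zero]
  obtain ⟨m, hm⟩ : ∃ m, p - 1 = m + 1 := ⟨p - 2, by have := (Fact.out : p.Prime).two_le; omega⟩
  have h0 : adIter ((Polynomial.X : Polynomial F) ⊗ₜ[F] a + (1 : Polynomial F) ⊗ₜ[F] b)
      (p - 1) ((1 : Polynomial F) ⊗ₜ[F] a) = 0 := by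
    rw [hm]; exact adIter_succ_zero hbr m
  rw [h0] at hs1
  have hsj : ∀ i : Fin (p - 1), s i = 0 := by
    intro i
    classical
    set Li : Polynomial F ⊗[F] L →ₗ[F] L :=
      (TensorProduct.lid F L).toLinearMap ∘ₗ LinearMap.rTensor L (Polynomial.lcoeff F (i : ℕ))
      with hLi
    have happ := congrArg Li hs1.symm
    rw [map_zero, map_sum] at happ
    have hterm : ∀ j : Fin (p - 1),
        Li (((j : ℕ) + 1) • (((Polynomial.X : Polynomial F) ^ (j : ℕ)) ⊗ₜ[F] s j))
          = if (i : ℕ) = (j : ℕ) then ((j : ℕ) + 1) • s j else 0 := by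
      intro j
      rw [map_nsmul, hLi]
      simp only [LinearMap.coe_comp, Function.comp_apply, LinearMap.rTensor_tmul,
        LinearEquiv.coe_toLinearMap, TensorProduct.lid_tmul, Polynomial.lcoeff_apply,
        Polynomial.coeff_X_pow]
      split
      · rw [one_smul]
      · rw [zero_smul, smul_zero]
    rw [Finset.sum_congr rfl (fun j _ => hterm j)] at happ
    simp only [Fin.val_eq_val] at happ
    rw [Finset.sum_ite_eq Finset.univ i (fun j => ((j : ℕ) + 1) • s j)] at happ
    simp only [Finset.mem_univ, if_true] at happ
    have hnz : (((i : ℕ) + 1 : ℕ) : F) ≠ 0 := by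
      intro hc
      have hdvd := (CharP.cast_eq_zero_iff F p ((i : ℕ) + 1)).mp hc
      have hle := Nat.le_of_dvd (Nat.succ_pos _) hdvd
      have := i.isLt
      omega
    have : (((i : ℕ) + 1 : ℕ) : F) • s i = 0 := by
      rw [Nat.cast_smul_eq_nsmul]
      exact happ
    exact (smul_eq_zero.mp this).resolve_left hnz
  rw [hs2, Finset.sum_congr rfl (fun j _ => hsj j), Finset.sum_const_zero, add_zero]

theorem lie_iterate (hpm : IsPMap p F L pm) {a b : L} (h : ⁅a, b⁆ = 0) :
    ∀ i j : ℕ, ⁅pm^[i] a, pm^[j] b⁆ = 0 := by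
  have hr : ∀ (a b : L), ⁅a, b⁆ = 0 → ∀ j, ⁅a, pm^[j] b⁆ = 0 := by
    intro a b hab j
    induction j with
    | zero => exact hab
    | succ j ih => rw [Function.iterate_succ_apply']; exact pm_lie_right hpm ih
  intro i
  induction i with
  | zero => exact hr a b h
  | succ i ih =>
    intro j
    rw [Function.iterate_succ_apply']
    have : ∀ j, ⁅pm^[i] a, pm^[j] b⁆ = 0 := ih
    exact pm_lie_left hpm (this j)

theorem span_lie_zero {s : Set L} (hs : ∀ a ∈ s, ∀ b ∈ s, ⁅a, b⁆ = 0) :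
    ∀ a ∈ Submodule.span F s, ∀ b ∈ Submodule.span F s, ⁅a, b⁆ = 0 := by
  have h1 : ∀ a ∈ s, ∀ b ∈ Submodule.span F s, ⁅a, b⁆ = 0 := by
    intro a ha b hb
    induction hb using Submodule.span_induction with
    | mem m hm => exact hs a ha m hm
    | zero => exact lie_zero a
    | add m n _ _ hm hn => rw [lie_add, hm, hn, add_zero]
    | smul c m _ hm => rw [lie_smul, hm, smul_zero]
  intro a ha b hb
  induction ha using Submodule.span_induction with
  | mem m hm => exact h1 m hm b hb
  | zero => exact zero_lie b
  | add m n _ _ hm hn => rw [add_lie, hm, hn, add_zero]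
  | smul c m _ hm => rw [smul_lie, hm, smul_zero]

theorem pm_mem_span (hpm : IsPMap p F L pm) {s : Set L}
    (hs : ∀ a ∈ s, ∀ b ∈ s, ⁅a, b⁆ = 0)
    (hgen : ∀ m ∈ s, pm m ∈ Submodule.span F s) :
    ∀ a ∈ Submodule.span F s, pm a ∈ Submodule.span F s := by
  intro a ha
  induction ha using Submodule.span_induction with
  | mem m hm => exact hgen m hm
  | zero => rw [pm_zero hpm]; exact Submodule.zero_mem _
  | add m n hm hn ihm ihn =>
    rw [pm_add hpm (span_lie_zero hs m hm n hn)]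
    exact Submodule.add_mem _ ihm ihn
  | smul c m _ ihm =>
    rw [hpm.smul_pow]
    exact Submodule.smul_mem _ _ ihm

theorem mem_pSpan_iff {S : Set L} {z : L} :
    z ∈ pSpan F pm S ↔
      ∀ H : LieSubalgebra F L, IsPSubalgebra F pm H → S ⊆ H → z ∈ H := by
  have h : z ∈ pSpan F pm S ↔ z ∈ (↑(pSpan F pm S) : Set L) := Iff.rfl
  rw [h, pSpan, LieSubalgebra.coe_sInf]
  constructor
  · intro hz H h1 h2
    simp only [Set.mem_iInter, Set.mem_setOf_eq, SetLike.mem_coe] at hz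
    exact hz H ⟨h1, h2⟩
  · intro hz
    simp only [Set.mem_iInter, Set.mem_setOf_eq, SetLike.mem_coe]
    exact fun H hH => hz H hH.1 hH.2

theorem pSpan_pm_closed {S : Set L} {v : L} (hv : v ∈ pSpan F pm S) :
    pm v ∈ pSpan F pm S := by
  rw [mem_pSpan_iff] at hv ⊢
  exact fun H h1 h2 => h1 v (hv H h1 h2)

theorem isSemisimpleElt_to_span (hpm : IsPMap p F L pm) {z : L}
    (hss : IsSemisimpleElt F pm z) :
    z ∈ Submodule.span F (Set.range fun k : ℕ => pm^[k + 1] z) := by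
  have habz : ∀ a ∈ (Set.range fun k : ℕ => pm^[k + 1] z),
      ∀ b ∈ (Set.range fun k : ℕ => pm^[k + 1] z), ⁅a, b⁆ = 0 := by
    rintro _ ⟨i, rfl⟩ _ ⟨j, rfl⟩
    exact lie_iterate hpm (lie_self z) (i + 1) (j + 1)
  set Sz : Submodule F L := Submodule.span F (Set.range fun k : ℕ => pm^[k + 1] z) with hSz
  let H : LieSubalgebra F L :=
    { Sz with
      lie_mem' := fun {a b} ha hb => by
        have : ⁅a, b⁆ = 0 := span_lie_zero habz a ha b hb
        rw [this]; exact Sz.zero_mem }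
  have hH1 : IsPSubalgebra F pm H := by
    intro m hm
    refine pm_mem_span hpm habz ?_ m hm
    rintro _ ⟨k, rfl⟩
    refine Submodule.subset_span ⟨k + 1, ?_⟩
    show pm^[k + 1 + 1] z = pm (pm^[k + 1] z)
    rw [Function.iterate_succ_apply']
  have hH2 : {pm z} ⊆ (H : Set L) := by
    rintro _ rfl
    exact Submodule.subset_span ⟨0, by simp⟩
  exact mem_pSpan_iff.mp hss H hH1 hH2

theorem span_to_isSemisimpleElt (hpm : IsPMap p F L pm) {z : L}
    (hz : z ∈ Submodule.span F (Set.range fun k : ℕ => pm^[k + 1] z)) :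
    IsSemisimpleElt F pm z := by
  have hbase : pm z ∈ pSpan F pm {pm z} :=
    mem_pSpan_iff.mpr fun H _ h2 => h2 rfl
  have hiter : ∀ k : ℕ, pm^[k + 1] z ∈ pSpan F pm {pm z} := by
    intro k
    induction k with
    | zero => exact hbase
    | succ k ih =>
      rw [Function.iterate_succ_apply']
      exact pSpan_pm_closed ih
  show z ∈ pSpan F pm {pm z}
  have hle : Submodule.span F (Set.range fun k : ℕ => pm^[k + 1] z)
      ≤ (pSpan F pm {pm z} : LieSubalgebra F L).toSubmodule := by
    rw [Submodule.span_le]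
    rintro _ ⟨k, rfl⟩
    exact hiter k
  exact hle hz

end LieAux

/-- In a restricted Lie algebra, if `x, y` are semisimple and commute,
then `x + y` is semisimple. -/
theorem isSemisimpleElt_add (p : ℕ) [Fact p.Prime]
    (F : Type*) [Field F] [CharP F p]
    {L : Type*} [LieRing L] [LieAlgebra F L]
    (pm : L → L) (hpm : IsPMap p F L pm)
    {x y : L} (hx : IsSemisimpleElt F pm x) (hy : IsSemisimpleElt F pm y)
    (hxy : ⁅x, y⁆ = 0) : IsSemisimpleElt F pm (x + y) := by
  classical
  set T : Set L := (Set.range fun k : ℕ => pm^[k] x) ∪ (Set.range fun k : ℕ => pm^[k] y) with hT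
  have hyx : ⁅y, x⁆ = 0 := by rw [← lie_skew, hxy, neg_zero]
  have habT : ∀ a ∈ T, ∀ b ∈ T, ⁅a, b⁆ = 0 := by
    rintro a (⟨i, rfl⟩ | ⟨i, rfl⟩) b (⟨j, rfl⟩ | ⟨j, rfl⟩)
    · exact lie_iterate hpm (lie_self x) i j
    · exact lie_iterate hpm hxy i j
    · exact lie_iterate hpm hyx i j
    · exact lie_iterate hpm (lie_self y) i j
  set A : Submodule F L := Submodule.span F T with hA
  have hgenT : ∀ m ∈ T, pm m ∈ A := by
    rintro m (⟨k, rfl⟩ | ⟨k, rfl⟩)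
    · exact Submodule.subset_span (Or.inl ⟨k + 1,
        show pm^[k + 1] x = pm (pm^[k] x) from Function.iterate_succ_apply' pm k x⟩)
    · exact Submodule.subset_span (Or.inr ⟨k + 1,
        show pm^[k + 1] y = pm (pm^[k] y) from Function.iterate_succ_apply' pm k y⟩)
  have hpmA : ∀ a ∈ A, pm a ∈ A := pm_mem_span hpm habT hgenT
  have habA := span_lie_zero (F := F) habT
  let φ : A →ₛₗ[frobenius F p] A :=
    { toFun := fun a => ⟨pm ↑a, hpmA ↑a a.2⟩
      map_add' := fun a b => Subtype.ext (pm_add hpm (habA ↑a a.2 ↑b b.2))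
      map_smul' := fun c a => Subtype.ext (by
        show pm (c • (a : L)) = frobenius F p c • pm (a : L)
        rw [hpm.smul_pow, frobenius_def]) }
  have hcoeiter : ∀ (k : ℕ) (a : A), ((φ^[k] a : A) : L) = pm^[k] (a : L) := by
    intro k
    induction k with
    | zero => intro a; rfl
    | succ k ih =>
      intro a
      rw [Function.iterate_succ_apply, Function.iterate_succ_apply]
      exact ih (φ a)
  have hxA : x ∈ A := Submodule.subset_span (Or.inl ⟨0, rfl⟩)
  have hyA : y ∈ A := Submodule.subset_span (Or.inr ⟨0, rfl⟩)
  have key : ∀ v : A, v ∈ Submodule.span F (Set.range fun k : ℕ => φ^[k + 1] v) ↔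
      (v : L) ∈ Submodule.span F (Set.range fun k : ℕ => pm^[k + 1] (v : L)) := by
    intro v
    have himg : (A.subtype '' Set.range fun k : ℕ => φ^[k + 1] v)
        = Set.range fun k : ℕ => pm^[k + 1] (v : L) := by
      ext m
      constructor
      · rintro ⟨_, ⟨k, rfl⟩, rfl⟩
        exact ⟨k, (hcoeiter (k + 1) v).symm⟩
      · rintro ⟨k, rfl⟩
        exact ⟨φ^[k + 1] v, ⟨k, rfl⟩, hcoeiter (k + 1) v⟩
    constructor
    · intro h
      have h2 := Submodule.mem_map_of_mem (f := A.subtype) h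
      rwa [Submodule.map_span, himg] at h2
    · intro h
      rw [← himg, ← Submodule.map_span] at h
      obtain ⟨w, hw, hwv⟩ := h
      exact (Subtype.ext hwv : w = v) ▸ hw
  have hx' := (key ⟨x, hxA⟩).mpr (isSemisimpleElt_to_span hpm hx)
  have hy' := (key ⟨y, hyA⟩).mpr (isSemisimpleElt_to_span hpm hy)
  have hsum := semilinear_add φ ⟨x, hxA⟩ ⟨y, hyA⟩ hx' hy'
  have heq : (⟨x, hxA⟩ + ⟨y, hyA⟩ : A) = (⟨x + y, A.add_mem hxA hyA⟩ : A) := rfl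
  rw [heq] at hsum
  have hfin := (key ⟨x + y, A.add_mem hxA hyA⟩).mp hsum
  exact span_to_isSemisimpleElt hpm hfin
end

section
/- Let (L, [p]) be a finite-dimensional restricted Lie algebra over a field of characteristic p > 0. Then for every x ∈ L there exists a positive integer k such that x^{[p]^k} is semisimple. -/
open scoped TensorProduct

lemma mem_pSpan_of_mem (F : Type*) [Field F] {L : Type*} [LieRing L] [LieAlgebra F L]
    (pm : L → L) (S : Set L) {s : L} (hs : s ∈ S) : s ∈ pSpan F pm S := by
  have : s ∈ (↑(pSpan F pm S) : Set L) := by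
    rw [pSpan, LieSubalgebra.coe_sInf]
    exact Set.mem_iInter₂.mpr fun K hK => hK.2 hs
  exact this

lemma pSpan_isPSubalgebra (F : Type*) [Field F] {L : Type*} [LieRing L] [LieAlgebra F L]
    (pm : L → L) (S : Set L) : IsPSubalgebra F pm (pSpan F pm S) := by
  intro y hy
  have hy' : y ∈ (↑(pSpan F pm S) : Set L) := hy
  rw [pSpan, LieSubalgebra.coe_sInf] at hy'
  have : pm y ∈ (↑(pSpan F pm S) : Set L) := by
    rw [pSpan, LieSubalgebra.coe_sInf]
    exact Set.mem_iInter₂.mpr fun K hK =>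
      hK.1 y (Set.mem_iInter₂.mp hy' K hK)
  exact this

lemma pSpan_le (F : Type*) [Field F] {L : Type*} [LieRing L] [LieAlgebra F L]
    (pm : L → L) (S : Set L) {H : LieSubalgebra F L} (h1 : IsPSubalgebra F pm H)
    (h2 : S ⊆ H) : pSpan F pm S ≤ H :=
  sInf_le ⟨h1, h2⟩

/-- In a finite-dimensional restricted Lie algebra, for every `x` some iterate
`x^{[p]^k}` (with `k ≥ 1`) is semisimple. -/
theorem exists_iterate_pMap_isSemisimpleElt (p : ℕ) [Fact p.Prime]
    (F : Type*) [Field F] [CharP F p]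
    {L : Type*} [LieRing L] [LieAlgebra F L] [FiniteDimensional F L]
    (pm : L → L) (hpm : IsPMap p F L pm) (x : L) :
    ∃ k : ℕ, 0 < k ∧ IsSemisimpleElt F pm (pm^[k] x) := by
  set H : ℕ → LieSubalgebra F L := fun k => pSpan F pm {pm^[k] x} with hHdef
  have hmem : ∀ k, pm^[k] x ∈ H k := fun k =>
    mem_pSpan_of_mem F pm _ rfl
  have hstep : ∀ k, pm^[k+1] x ∈ H k := by
    intro k
    rw [Function.iterate_succ_apply']
    exact pSpan_isPSubalgebra F pm _ _ (hmem k)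
  have hle : ∀ k, H (k+1) ≤ H k := by
    intro k
    exact pSpan_le F pm _ (pSpan_isPSubalgebra F pm _)
      (Set.singleton_subset_iff.mpr (hstep k))
  set f : ℕ → ℕ := fun k => Module.finrank F (H k).toSubmodule with hfdef
  have hfle : ∀ k, f (k+1) ≤ f k := fun k =>
    Submodule.finrank_mono ((LieSubalgebra.toSubmodule_le_toSubmodule _ _).mpr (hle k))
  obtain ⟨k, hk, hfk⟩ : ∃ k, 0 < k ∧ f k ≤ f (k+1) := by
    by_contra h
    push_neg at h
    have hd : ∀ n, f (n+1) + n ≤ f 1 := by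
      intro n
      induction n with
      | zero => simp
      | succ n ih =>
        have := h (n+1) (Nat.succ_pos n)
        omega
    have := hd (f 1 + 1)
    omega
  have heq : H k = H (k+1) := by
    have : (H (k+1)).toSubmodule = (H k).toSubmodule :=
      Submodule.eq_of_le_of_finrank_le
        ((LieSubalgebra.toSubmodule_le_toSubmodule _ _).mpr (hle k)) hfk
    exact (LieSubalgebra.toSubmodule_injective this).symm
  refine ⟨k, hk, ?_⟩
  have : pm^[k] x ∈ H (k+1) := heq ▸ hmem k
  simpa [IsSemisimpleElt, hHdef, ← Function.iterate_succ_apply' pm k x] using this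
end
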